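/- Every normed space of dimension at least 3 admits an M-set of cardinality 4, i.e., m(X) ≥ 4. -/

import Mathlib

def IsMSet (X : Type*) [NormedAddCommGroup X] (S : Set X) : Prop :=
  (∀ x ∈ S, 1 < ‖x‖) ∧ ∀ x ∈ S, ∀ y ∈ S, x ≠ y → ‖x + y‖ = 2

open Module Set

theorem mset_four_points_dim_ge_three
    (X : Type*) [NormedAddCommGroup X] [NormedSpace ℝ X]
    (hdim : 3 ≤ Module.rank ℝ X) :
    ∃ S : Set X, IsMSet X S ∧ S.ncard = 4 := by
  classical
  -- independent triple
  obtain ⟨f, hf⟩ := exists_linearIndependent_of_le_rank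
    (show (3 : ℕ) ≤ Module.rank ℝ X by exact_mod_cast hdim)
  set E := EuclideanSpace ℝ (Fin 3)
  let T : E →ₗ[ℝ] X :=
    (Fintype.linearCombination ℝ f).comp (WithLp.linearEquiv 2 ℝ (Fin 3 → ℝ)).toLinearMap
  have hT_apply : ∀ v : E, T v = ∑ i, v i • f i := fun v => rfl
  have hT_inj : Function.Injective T := by
    rw [← LinearMap.ker_eq_bot, LinearMap.ker_eq_bot']
    intro v hv
    have h0 := (Fintype.linearIndependent_iff.mp hf) (fun i => v i) (by
      simpa [hT_apply] using hv)
    ext i; exact h0 i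
  have hT_cont : Continuous T := T.continuous_of_finiteDimensional
  -- lower bound
  have hsph : IsCompact (Metric.sphere (0 : E) 1) := isCompact_sphere _ _
  have hsne : (Metric.sphere (0 : E) 1).Nonempty :=
    NormedSpace.sphere_nonempty.2 zero_le_one
  obtain ⟨v₀, hv₀mem, hv₀min'⟩ := hsph.exists_isMinOn hsne (hT_cont.norm.continuousOn)
  have hv₀min : ∀ v ∈ Metric.sphere (0:E) 1, ‖T v₀‖ ≤ ‖T v‖ := fun v hv => hv₀min' hv
  have hv₀norm : ‖v₀‖ = 1 := by simpa using hv₀mem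
  have hv₀ne : v₀ ≠ 0 := by intro h; rw [h] at hv₀norm; simp at hv₀norm
  set c := ‖T v₀‖ with hc
  have hc0 : 0 < c := by
    have : T v₀ ≠ 0 := fun h => hv₀ne (hT_inj (by simpa using h))
    simpa [hc] using norm_pos_iff.mpr this
  have hlow : ∀ v : E, c * ‖v‖ ≤ ‖T v‖ := by
    intro v
    rcases eq_or_ne v 0 with rfl | hv
    · simp
    · have hmem : (‖v‖⁻¹ • v) ∈ Metric.sphere (0 : E) 1 := by
        simp [norm_smul, norm_ne_zero_iff.mpr hv, inv_mul_cancel₀]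
      have := hv₀min _ hmem
      rw [map_smul, norm_smul] at this
      have hnv : 0 < ‖v‖ := norm_pos_iff.mpr hv
      rw [norm_inv, norm_norm] at this
      calc c * ‖v‖ ≤ (‖v‖⁻¹ * ‖T v‖) * ‖v‖ := by
            apply mul_le_mul_of_nonneg_right this hnv.le
        _ = ‖T v‖ := by field_simp
  -- the compact set K
  set K : Set E := {v | ‖T v‖ ≤ 1} with hK
  have hKclosed : IsClosed K := isClosed_le hT_cont.norm continuous_const
  have hKsub : K ⊆ Metric.closedBall 0 c⁻¹ := by
    intro v hv
    simp only [Metric.mem_closedBall, dist_zero_right]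
    have h := le_trans (hlow v) hv
    rw [← mul_le_mul_iff_right₀ hc0]
    calc c * ‖v‖ ≤ 1 := h
      _ = c * c⁻¹ := by field_simp
  have hKcpt : IsCompact K := (isCompact_closedBall (0:E) c⁻¹).of_isClosed_subset hKclosed hKsub
  have hKne : K.Nonempty := ⟨0, by simp [hK]⟩
  obtain ⟨r, hrK, hrmax'⟩ := hKcpt.exists_isMaxOn hKne continuous_norm.continuousOn
  have hrmax : ∀ v ∈ K, ‖v‖ ≤ ‖r‖ := fun v hv => hrmax' hv
  -- r is on the unit sphere of the pulled-back norm
  have hw0 : (‖T v₀‖⁻¹ • v₀) ∈ K := by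
    simp only [hK, mem_setOf_eq, map_smul, norm_smul, norm_inv, norm_norm]
    rw [inv_mul_cancel₀ (ne_of_gt hc0)]
  have hr0 : 0 < ‖r‖ := by
    have h1 := hrmax _ hw0
    have : (0:ℝ) < ‖(‖T v₀‖⁻¹ • v₀)‖ := by
      rw [norm_smul, norm_inv, norm_norm, hv₀norm]
      positivity
    linarith
  have hrne : r ≠ 0 := fun h => by rw [h] at hr0; simp at hr0
  have hTr : ‖T r‖ = 1 := by
    rcases lt_trichotomy ‖T r‖ 1 with h | h | h
    · exfalso
      rcases eq_or_lt_of_le (norm_nonneg (T r)) with h0 | h0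
      · exact hrne (hT_inj (by simpa using (norm_eq_zero.mp h0.symm)))
      · have hmem : (‖T r‖⁻¹ • r) ∈ K := by
          simp only [hK, mem_setOf_eq, map_smul, norm_smul, norm_inv, norm_norm]
          rw [inv_mul_cancel₀ (ne_of_gt h0)]
        have hgt : ‖r‖ < ‖(‖T r‖⁻¹ • r)‖ := by
          rw [norm_smul, norm_inv, norm_norm]
          have : (1:ℝ) < ‖T r‖⁻¹ := (one_lt_inv₀ h0).mpr h
          nlinarith
        exact absurd (hrmax _ hmem) (not_le.mpr hgt)
    · exact h
    · exact absurd hrK (by simp [hK]; linarith)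
  -- key lemma
  have key : ∀ w : E, inner ℝ r w = (0:ℝ) → w ≠ 0 → 1 < ‖T (r + w)‖ := by
    intro w hw hwne
    by_contra hle
    push_neg at hle
    have hmem : r + w ∈ K := hle
    have h1 : ‖r + w‖ ≤ ‖r‖ := hrmax _ hmem
    have h2 : ‖r + w‖ ^ 2 = ‖r‖ ^ 2 + ‖w‖ ^ 2 := by
      rw [norm_add_sq_real, hw]; ring
    have h3 : 0 < ‖w‖ := norm_pos_iff.mpr hwne
    nlinarith [norm_nonneg (r + w)]
  -- pick p q orthogonal to r
  have hfinE : finrank ℝ E = 3 := by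
    simp [E, finrank_euclideanSpace]
  have hWrank : finrank ℝ ((ℝ ∙ r)ᗮ : Submodule ℝ E) = 2 :=
    Submodule.finrank_add_finrank_orthogonal' (by rw [finrank_span_singleton hrne, hfinE])
  let b := Module.finBasisOfFinrankEq ℝ ((ℝ ∙ r)ᗮ : Submodule ℝ E) hWrank
  have hind : LinearIndependent ℝ (fun i : Fin 2 => ((b i : (ℝ ∙ r)ᗮ) : E)) :=
    b.linearIndependent.map' (ℝ ∙ r)ᗮ.subtype (Submodule.ker_subtype _)
  set u : E := ((b 0 : (ℝ ∙ r)ᗮ) : E) with hu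
  set v : E := ((b 1 : (ℝ ∙ r)ᗮ) : E) with hv
  have horth : ∀ w : ((ℝ ∙ r)ᗮ : Submodule ℝ E), inner ℝ r ((w : E)) = (0 : ℝ) := by
    intro w
    have hm : (w : E) ∈ (ℝ ∙ r)ᗮ := w.2
    exact (Submodule.mem_orthogonal _ _).mp hm r (Submodule.mem_span_singleton_self r)
  have hru : inner ℝ r u = (0:ℝ) := horth _
  have hrv : inner ℝ r v = (0:ℝ) := horth _
  have hcomb : ∀ s t : ℝ, ¬(s = 0 ∧ t = 0) → s • u + t • v ≠ 0 := by
    intro s t hst h0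
    have := Fintype.linearIndependent_iff.mp hind ![s, t] (by
      simpa [Fin.sum_univ_two] using h0)
    exact hst ⟨this 0, this 1⟩
  have hune : u ≠ 0 := by
    have := hcomb 1 0 (by norm_num)
    simpa using this
  have hvne : v ≠ 0 := by
    have := hcomb 0 1 (by norm_num)
    simpa using this
  have hTu0 : ‖T u‖ ≠ 0 := fun h =>
    hune (hT_inj (by simpa using norm_eq_zero.mp h))
  have hTv0 : ‖T v‖ ≠ 0 := fun h =>
    hvne (hT_inj (by simpa using norm_eq_zero.mp h))
  set p : E := ‖T u‖⁻¹ • u with hp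
  set q : E := ‖T v‖⁻¹ • v with hq
  have hTp1 : ‖T p‖ = 1 := by
    rw [hp, map_smul, norm_smul, norm_inv, norm_norm, inv_mul_cancel₀ hTu0]
  have hTq1 : ‖T q‖ = 1 := by
    rw [hq, map_smul, norm_smul, norm_inv, norm_norm, inv_mul_cancel₀ hTv0]
  have hrp : inner ℝ r p = (0:ℝ) := by rw [hp, inner_smul_right, hru, mul_zero]
  have hrq : inner ℝ r q = (0:ℝ) := by rw [hq, inner_smul_right, hrv, mul_zero]
  -- nonvanishing combinations
  have hpq_add : p + q ≠ 0 := by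
    rw [hp, hq]
    exact hcomb _ _ (by push_neg; intro h; exact absurd h (inv_ne_zero hTu0))
  have hpq_sub : p - q ≠ 0 := by
    rw [hp, hq, sub_eq_add_neg, ← neg_smul]
    exact hcomb _ _ (by push_neg; intro h; exact absurd h (inv_ne_zero hTu0))
  have hqp_sub : q - p ≠ 0 := fun h => hpq_sub (by rw [← neg_sub q p, h, neg_zero])
  have hnegpq : -(p + q) ≠ 0 := fun h => hpq_add (neg_eq_zero.mp h)
  have horth_ne : ∀ w : E, inner ℝ r w = (0:ℝ) → w + r ≠ 0 ∧ w - r ≠ 0 := by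
    intro w hw
    have hrr : inner ℝ r r = (0:ℝ) → False := by
      intro h
      exact hrne (inner_self_eq_zero.mp h)
    constructor
    · intro h
      apply hrr
      have : inner ℝ r (w + r) = (0:ℝ) := by rw [h, inner_zero_right]
      rw [inner_add_right, hw, zero_add] at this
      exact this
    · intro h
      apply hrr
      have : inner ℝ r (w - r) = (0:ℝ) := by rw [h, inner_zero_right]
      rw [inner_sub_right, hw, zero_sub, neg_eq_zero] at this
      exact this
  -- the four points
  set a1 : X := T (p + q + r) with ha1
  set a2 : X := T (p - q - r) with ha2
  set a3 : X := T (-p + q - r) with ha3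
  set a4 : X := T (-p - q + r) with ha4
  -- norms > 1
  have hn1 : 1 < ‖a1‖ := by
    rw [ha1, show p + q + r = r + (p + q) by abel]
    exact key _ (by rw [inner_add_right, hrp, hrq]; norm_num) hpq_add
  have hn2 : 1 < ‖a2‖ := by
    rw [ha2, show p - q - r = -(r + (q - p)) by abel, map_neg, norm_neg]
    exact key _ (by rw [inner_sub_right, hrp, hrq]; norm_num) hqp_sub
  have hn3 : 1 < ‖a3‖ := by
    rw [ha3, show -p + q - r = -(r + (p - q)) by abel, map_neg, norm_neg]
    exact key _ (by rw [inner_sub_right, hrp, hrq]; norm_num) hpq_sub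
  have hn4 : 1 < ‖a4‖ := by
    rw [ha4, show -p - q + r = r + (-(p + q)) by abel]
    exact key _ (by rw [inner_neg_right, inner_add_right, hrp, hrq]; norm_num) hnegpq
  -- sums have norm 2
  have hsum2 : ∀ z : E, ‖T z‖ = 1 → ∀ w : E, (w = z + z ∨ w = -(z + z)) → ‖T w‖ = 2 := by
    intro z hz w hw
    have hzz : ‖T (z + z)‖ = 2 := by
      rw [map_add, ← two_smul ℝ, norm_smul, hz]
      norm_num
    rcases hw with rfl | rfl
    · exact hzz
    · rw [map_neg, norm_neg]; exact hzz
  -- distinctness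
  have hne12 : a1 ≠ a2 := by
    intro h
    have heq := hT_inj h
    have h0 : (2:ℝ) • (q + r) = (p + q + r) - (p - q - r) := by rw [two_smul]; abel
    rw [heq, sub_self] at h0
    rcases smul_eq_zero.mp h0 with h | h
    · norm_num at h
    · exact (horth_ne q hrq).1 h
  have hne13 : a1 ≠ a3 := by
    intro h
    have heq := hT_inj h
    have h0 : (2:ℝ) • (p + r) = (p + q + r) - (-p + q - r) := by rw [two_smul]; abel
    rw [heq, sub_self] at h0
    rcases smul_eq_zero.mp h0 with h | h
    · norm_num at h
    · exact (horth_ne p hrp).1 h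
  have hne14 : a1 ≠ a4 := by
    intro h
    have heq := hT_inj h
    have h0 : (2:ℝ) • (p + q) = (p + q + r) - (-p - q + r) := by rw [two_smul]; abel
    rw [heq, sub_self] at h0
    rcases smul_eq_zero.mp h0 with h | h
    · norm_num at h
    · exact hpq_add h
  have hne23 : a2 ≠ a3 := by
    intro h
    have heq := hT_inj h
    have h0 : (2:ℝ) • (p - q) = (p - q - r) - (-p + q - r) := by rw [two_smul]; abel
    rw [heq, sub_self] at h0
    rcases smul_eq_zero.mp h0 with h | h
    · norm_num at h
    · exact hpq_sub h
  have hne24 : a2 ≠ a4 := by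
    intro h
    have heq := hT_inj h
    have h0 : (2:ℝ) • (p - r) = (p - q - r) - (-p - q + r) := by rw [two_smul]; abel
    rw [heq, sub_self] at h0
    rcases smul_eq_zero.mp h0 with h | h
    · norm_num at h
    · exact (horth_ne p hrp).2 h
  have hne34 : a3 ≠ a4 := by
    intro h
    have heq := hT_inj h
    have h0 : (2:ℝ) • (q - r) = (-p + q - r) - (-p - q + r) := by rw [two_smul]; abel
    rw [heq, sub_self] at h0
    rcases smul_eq_zero.mp h0 with h | h
    · norm_num at h
    · exact (horth_ne q hrq).2 h
  have hs12 : ‖a1 + a2‖ = 2 := by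
    simp only [ha1, ha2, ha3, ha4]
    rw [← map_add]
    exact hsum2 _ hTp1 _ (Or.inl (by abel))
  have hs21 : ‖a2 + a1‖ = 2 := by rw [add_comm]; exact hs12
  have hs13 : ‖a1 + a3‖ = 2 := by
    simp only [ha1, ha2, ha3, ha4]
    rw [← map_add]
    exact hsum2 _ hTq1 _ (Or.inl (by abel))
  have hs31 : ‖a3 + a1‖ = 2 := by rw [add_comm]; exact hs13
  have hs14 : ‖a1 + a4‖ = 2 := by
    simp only [ha1, ha2, ha3, ha4]
    rw [← map_add]
    exact hsum2 _ hTr _ (Or.inl (by abel))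
  have hs41 : ‖a4 + a1‖ = 2 := by rw [add_comm]; exact hs14
  have hs23 : ‖a2 + a3‖ = 2 := by
    simp only [ha1, ha2, ha3, ha4]
    rw [← map_add]
    exact hsum2 _ hTr _ (Or.inr (by abel))
  have hs32 : ‖a3 + a2‖ = 2 := by rw [add_comm]; exact hs23
  have hs24 : ‖a2 + a4‖ = 2 := by
    simp only [ha1, ha2, ha3, ha4]
    rw [← map_add]
    exact hsum2 _ hTq1 _ (Or.inr (by abel))
  have hs42 : ‖a4 + a2‖ = 2 := by rw [add_comm]; exact hs24
  have hs34 : ‖a3 + a4‖ = 2 := by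
    simp only [ha1, ha2, ha3, ha4]
    rw [← map_add]
    exact hsum2 _ hTp1 _ (Or.inr (by abel))
  have hs43 : ‖a4 + a3‖ = 2 := by rw [add_comm]; exact hs34
  -- assemble
  refine ⟨{a1, a2, a3, a4}, ⟨?_, ?_⟩, ?_⟩
  · intro x hx
    simp only [Set.mem_insert_iff, Set.mem_singleton_iff] at hx
    rcases hx with rfl | rfl | rfl | rfl
    · exact hn1
    · exact hn2
    · exact hn3
    · exact hn4
  · intro x hx y hy hxy
    simp only [Set.mem_insert_iff, Set.mem_singleton_iff] at hx hy
    rcases hx with rfl | rfl | rfl | rfl <;> rcases hy with rfl | rfl | rfl | rfl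
    · exact absurd rfl hxy
    · exact hs12
    · exact hs13
    · exact hs14
    · exact hs21
    · exact absurd rfl hxy
    · exact hs23
    · exact hs24
    · exact hs31
    · exact hs32
    · exact absurd rfl hxy
    · exact hs34
    · exact hs41
    · exact hs42
    · exact hs43
    · exact absurd rfl hxy
  · rw [Set.ncard_insert_of_notMem (by simp [hne12, hne13, hne14]) (Set.toFinite _),
      Set.ncard_insert_of_notMem (by simp [hne23, hne24]) (Set.toFinite _),
      Set.ncard_insert_of_notMem (by simp [hne34]) (Set.toFinite _), Set.ncard_singleton]
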